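/- Let h be a Γ-equivariant continuous hermitian metric and let F ⊆ G be a measurable fundamental domain for the left translation action of Γ on G. Then there exists a continuous function ψ : G → ℝ such that for every g ∈ G and every continuous Γ-equivariant function f : G → V one has ∫_F h(x)(f(xg), f(xg)) dμ(x) ≤ ψ(g) · ∫_F h(x)(f(x), f(x)) dμ(x). In particular, the operator norm of the right translation operator R(g) : f ↦ (x ↦ f(xg)) on the L²-space of Γ-equivariant functions is uniformly bounded on every compact subset of G. -/

import Mathlib

open MeasureTheory Pointwise

/-- A `Γ`-equivariant continuous hermitian metric on the trivial `V`-bundle over `G`: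
a continuous assignment `g ↦ h g` of a hermitian inner product on `V`
(conjugate-linear in the first variable, linear in the second) satisfying
`h (γ * g) (χ γ v) (χ γ w) = h g v w`. -/
def IsEquivariantHermitianMetric {G V : Type*} [Group G] [TopologicalSpace G]
    [NormedAddCommGroup V] [NormedSpace ℂ V]
    (Γ : Subgroup G) (χ : Γ →* (V →ₗ[ℂ] V)ˣ) (h : G → V → V → ℂ) : Prop :=
  Continuous (fun p : G × V × V => h p.1 p.2.1 p.2.2) ∧
  (∀ (g : G) (v w w' : V), h g v (w + w') = h g v w + h g v w') ∧
  (∀ (g : G) (a : ℂ) (v w : V), h g v (a • w) = a * h g v w) ∧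
  (∀ (g : G) (v w : V), h g w v = (starRingEnd ℂ) (h g v w)) ∧
  (∀ (g : G) (v : V), v ≠ 0 → 0 < (h g v v).re) ∧
  (∀ (γ : Γ) (g : G) (v w : V),
    h ((γ : G) * g) ((χ γ : V →ₗ[ℂ] V) v) ((χ γ : V →ₗ[ℂ] V) w) = h g v w)

/-- There is a continuous `ψ : G → ℝ` such that for every `g ∈ G` and
every continuous `Γ`-equivariant `f : G → V`,
`∫_F h x (f (x g), f (x g)) dμ x ≤ ψ g * ∫_F h x (f x, f x) dμ x`,
where `F` is a measurable fundamental domain for the left translation action of `Γ`. -/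
theorem exists_continuous_bound_for_right_translation
    {G V : Type*} [Group G] [TopologicalSpace G] [IsTopologicalGroup G]
    [LocallyCompactSpace G] [T2Space G] [SecondCountableTopology G]
    [MeasurableSpace G] [BorelSpace G] (μ : Measure G)
    [μ.IsHaarMeasure] [μ.IsMulRightInvariant]
    [NormedAddCommGroup V] [NormedSpace ℂ V] [FiniteDimensional ℂ V] [Nontrivial V]
    (Γ : Subgroup G) [DiscreteTopology Γ]
    (hcocompact : ∃ C : Set G, IsCompact C ∧ ∀ g : G, ∃ γ ∈ Γ, γ * g ∈ C)
    (χ : Γ →* (V →ₗ[ℂ] V)ˣ)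
    (h : G → V → V → ℂ) (hh : IsEquivariantHermitianMetric Γ χ h)
    (F : Set G) (hF : IsFundamentalDomain Γ F μ) :
    ∃ ψ : G → ℝ, Continuous ψ ∧
      ∀ (g : G) (f : G → V), Continuous f →
        (∀ (γ : Γ) (x : G), f ((γ : G) * x) = (χ γ : V →ₗ[ℂ] V) (f x)) →
        (∫ x in F, (h x (f (x * g)) (f (x * g))).re ∂μ) ≤
          ψ g * ∫ x in F, (h x (f x) (f x)).re ∂μ := by
  obtain ⟨hcont, hadd, hsmul, hconj, hpos, hequiv⟩ := hh
  obtain ⟨C, hCcomp, hCcov⟩ := hcocompact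
  have hΓcount : Countable Γ := TopologicalSpace.separableSpace_iff_countable.mp inferInstance
  -- basic facts about the hermitian form
  have hzero : ∀ g : G, h g 0 0 = 0 := by
    intro g
    have := hadd g 0 0 0
    simp only [add_zero] at this
    linear_combination -this
  have hnonneg : ∀ (g : G) (v : V), 0 ≤ (h g v v).re := by
    intro g v
    by_cases hv : v = 0
    · simp [hv, hzero]
    · exact (hpos g v hv).le
  -- conjugate-linearity in the first variable
  have hsmul1 : ∀ (g : G) (a : ℂ) (v w : V),
      h g (a • v) w = (starRingEnd ℂ) a * h g v w := by
    intro g a v w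
    rw [hconj g w (a • v), hsmul, map_mul, ← hconj g w v]
  -- scaling
  have hscale : ∀ (g : G) (v : V), v ≠ 0 →
      (h g v v).re = ‖v‖ ^ 2 * (h g ((‖v‖⁻¹ : ℂ) • v) ((‖v‖⁻¹ : ℂ) • v)).re := by
    intro g v hv
    have hnv : (‖v‖ : ℂ) ≠ 0 := by
      simp [norm_ne_zero_iff.mpr hv]
    have : h g ((‖v‖⁻¹ : ℂ) • v) ((‖v‖⁻¹ : ℂ) • v)
        = (‖v‖⁻¹ : ℂ) * ((‖v‖⁻¹ : ℂ) * h g v v) := by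
      rw [hsmul, hsmul1]
      congr 1
      rw [← Complex.ofReal_inv, Complex.conj_ofReal]
    have hv' : ‖v‖ ≠ 0 := norm_ne_zero_iff.mpr hv
    rw [this, ← Complex.ofReal_inv, Complex.re_ofReal_mul, Complex.re_ofReal_mul]
    field_simp
  -- the compact parameter set
  set S : Set V := Metric.sphere (0 : V) 1 with hS
  have hScomp : IsCompact S := isCompact_sphere 0 1
  have hSne : S.Nonempty := NormedSpace.sphere_nonempty.mpr zero_le_one
  have hCne : C.Nonempty := by
    obtain ⟨γ, -, hγ⟩ := hCcov 1
    exact ⟨γ * 1, hγ⟩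
  set K : Set (G × V) := C ×ˢ S with hK
  have hKcomp : IsCompact K := hCcomp.prod hScomp
  have hKne : K.Nonempty := hCne.prod hSne
  -- numerator and denominator
  have hmap1 : Continuous fun p : G × V => (p.1, (p.2, p.2)) :=
    continuous_fst.prodMk (continuous_snd.prodMk continuous_snd)
  have hnumcont : Continuous fun p : G × V => (h p.1 p.2 p.2).re :=
    Complex.continuous_re.comp (hcont.comp hmap1)
  set A : ℝ := sSup ((fun p : G × V => (h p.1 p.2 p.2).re) '' K) with hA
  have hAbdd : BddAbove ((fun p : G × V => (h p.1 p.2 p.2).re) '' K) :=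
    (hKcomp.image hnumcont).bddAbove
  have hAle : ∀ p ∈ K, (h p.1 p.2 p.2).re ≤ A := fun p hp =>
    le_csSup hAbdd (Set.mem_image_of_mem _ hp)
  have hA0 : 0 ≤ A := by
    obtain ⟨p, hp⟩ := hKne
    exact le_trans (hnonneg p.1 p.2) (hAle p hp)
  set den : G → G × V → ℝ := fun g p => (h (p.1 * g) p.2 p.2).re with hden
  have hmap2 : Continuous fun q : G × G × V => (q.2.1 * q.1, (q.2.2, q.2.2)) :=
    ((continuous_fst.comp continuous_snd).mul continuous_fst).prodMk
      ((continuous_snd.comp continuous_snd).prodMk (continuous_snd.comp continuous_snd))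
  have hdencont : Continuous (Function.uncurry den) :=
    Complex.continuous_re.comp (hcont.comp hmap2)
  set B : G → ℝ := fun g => sInf (den g '' K) with hB
  have hBcont : Continuous B := hKcomp.continuous_sInf hdencont
  have hdg : ∀ g : G, Continuous (den g) := fun g =>
    hdencont.comp (Continuous.prodMk_right g)
  have hBle : ∀ g, ∀ p ∈ K, B g ≤ den g p := fun g p hp =>
    csInf_le (hKcomp.image (hdg g)).bddBelow (Set.mem_image_of_mem _ hp)
  have hBpos : ∀ g, 0 < B g := by
    intro g
    obtain ⟨p, hpK, hpeq⟩ := hKcomp.exists_sInf_image_eq hKne (hdg g).continuousOn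
    show 0 < sInf (den g '' K)
    rw [hpeq]
    apply hpos
    have : p.2 ∈ S := hpK.2
    intro h0
    rw [h0] at this
    simp [hS] at this
  set ψ : G → ℝ := fun g => A / B g with hψ
  have hψcont : Continuous ψ := continuous_const.div hBcont fun g => (hBpos g).ne'
  have hψ0 : ∀ g, 0 ≤ ψ g := fun g => div_nonneg hA0 (hBpos g).le
  -- key pointwise bound on C
  have key1 : ∀ (g : G), ∀ x ∈ C, ∀ v : V,
      (h x v v).re ≤ ψ g * (h (x * g) v v).re := by
    intro g x hx v
    by_cases hv : v = 0
    · simp [hv, hzero]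
    · have hu : ((‖v‖⁻¹ : ℂ) • v) ∈ S := by
        rw [hS, mem_sphere_zero_iff_norm]
        exact norm_smul_inv_norm hv
      have hpK : (x, (‖v‖⁻¹ : ℂ) • v) ∈ K := ⟨hx, hu⟩
      have h1 : (h x ((‖v‖⁻¹ : ℂ) • v) ((‖v‖⁻¹ : ℂ) • v)).re ≤ A := hAle _ hpK
      have h2 : B g ≤ (h (x * g) ((‖v‖⁻¹ : ℂ) • v) ((‖v‖⁻¹ : ℂ) • v)).re := hBle g _ hpK
      have h3 : (h x ((‖v‖⁻¹ : ℂ) • v) ((‖v‖⁻¹ : ℂ) • v)).re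
          ≤ ψ g * (h (x * g) ((‖v‖⁻¹ : ℂ) • v) ((‖v‖⁻¹ : ℂ) • v)).re := by
        calc (h x ((‖v‖⁻¹ : ℂ) • v) ((‖v‖⁻¹ : ℂ) • v)).re ≤ A := h1
        _ = ψ g * B g := (div_mul_cancel₀ A (hBpos g).ne').symm
        _ ≤ ψ g * (h (x * g) ((‖v‖⁻¹ : ℂ) • v) ((‖v‖⁻¹ : ℂ) • v)).re :=
            mul_le_mul_of_nonneg_left h2 (hψ0 g)
      rw [hscale x v hv, hscale (x * g) v hv, ← mul_assoc, mul_comm (ψ g) (‖v‖ ^ 2), mul_assoc]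
      exact mul_le_mul_of_nonneg_left h3 (by positivity)
  refine ⟨ψ, hψcont, ?_⟩
  intro g f hfc hfe
  set H : G → ℝ := fun x => (h x (f x) (f x)).re with hHdef
  have hHcont : Continuous H := by
    have hmap3 : Continuous fun x : G => (x, (f x, f x)) :=
      continuous_id.prodMk (hfc.prodMk hfc)
    exact Complex.continuous_re.comp (hcont.comp hmap3)
  have hHnonneg : ∀ x, 0 ≤ H x := fun x => hnonneg x (f x)
  have hHinv : ∀ (γ : Γ) (x : G), H ((γ : G) * x) = H x := by
    intro γ x
    simp only [hHdef]
    rw [hfe γ x, hequiv γ x (f x) (f x)]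
  -- key pointwise bound everywhere
  have key2 : ∀ x : G, (h x (f (x * g)) (f (x * g))).re ≤ ψ g * H (x * g) := by
    intro x
    obtain ⟨γ, hγΓ, hγx⟩ := hCcov x
    set γ' : Γ := ⟨γ, hγΓ⟩ with hγ'
    have e1 : (h x (f (x * g)) (f (x * g))).re
        = (h ((γ' : G) * x) (f (((γ' : G) * x) * g)) (f (((γ' : G) * x) * g))).re := by
      have : ((γ' : G) * x) * g = (γ' : G) * (x * g) := by group
      rw [this, hfe γ' (x * g), hequiv γ' x (f (x * g)) (f (x * g))]
    rw [e1]
    have := key1 g ((γ' : G) * x) hγx (f (((γ' : G) * x) * g))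
    refine this.trans ?_
    have e2 : ((γ' : G) * x) * g = (γ' : G) * (x * g) := by group
    rw [e2]
    have e3 : (h ((γ' : G) * (x * g)) (f ((γ' : G) * (x * g))) (f ((γ' : G) * (x * g)))).re
        = H ((γ' : G) * (x * g)) := rfl
    rw [e3, hHinv γ' (x * g)]
  -- boundedness of H
  set BH : ℝ := sSup (H '' C) with hBH
  have hBHle : ∀ x, H x ≤ BH := by
    intro x
    obtain ⟨γ, hγΓ, hγx⟩ := hCcov x
    have : H x = H ((γ : G) * x) := (hHinv ⟨γ, hγΓ⟩ x).symm
    rw [this]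
    exact le_csSup (hCcomp.image hHcont).bddAbove (Set.mem_image_of_mem _ hγx)
  have hBH0 : 0 ≤ BH := by
    obtain ⟨c, hc⟩ := hCne
    exact le_trans (hHnonneg c) (hBHle c)
  -- finiteness of the measure of F
  have hμF : μ F ≠ ⊤ := by
    have hsub : F ⊆ ⋃ γ : Γ, (γ • C ∩ F) := by
      intro x hx
      obtain ⟨γ, hγΓ, hγx⟩ := hCcov x
      refine Set.mem_iUnion.mpr ⟨(⟨γ, hγΓ⟩ : Γ)⁻¹, ?_, hx⟩
      refine ⟨γ * x, hγx, ?_⟩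
      show ((⟨γ, hγΓ⟩ : Γ)⁻¹ : G) * (γ * x) = x
      simp [mul_assoc]
    have hle : μ F ≤ ∑' γ : Γ, μ ((γ : Γ) • C ∩ F) :=
      le_trans (measure_mono hsub) (measure_iUnion_le _)
    have heq : μ C = ∑' γ : Γ, μ ((γ : Γ) • C ∩ F) := hF.measure_eq_tsum C
    intro htop
    have : μ C = ⊤ := by
      rw [heq]
      exact top_le_iff.mp (htop ▸ hle)
    exact (hCcomp.measure_lt_top.ne : μ C ≠ ⊤) this
  -- integrability
  have hLcont : Continuous fun x : G => (h x (f (x * g)) (f (x * g))).re := by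
    have hfg : Continuous fun x : G => f (x * g) := hfc.comp (continuous_mul_right g)
    have hmap4 : Continuous fun x : G => (x, (f (x * g), f (x * g))) :=
      continuous_id.prodMk (hfg.prodMk hfg)
    exact Complex.continuous_re.comp (hcont.comp hmap4)
  have hRcont : Continuous fun x : G => ψ g * H (x * g) :=
    continuous_const.mul (hHcont.comp (continuous_mul_right g))
  have hLint : IntegrableOn (fun x : G => (h x (f (x * g)) (f (x * g))).re) F μ := by
    apply Measure.integrableOn_of_bounded hμF
      hLcont.aestronglyMeasurable (M := ψ g * BH)
    filter_upwards with x
    rw [Real.norm_eq_abs, abs_of_nonneg (hnonneg _ _)]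
    exact (key2 x).trans (mul_le_mul_of_nonneg_left (hBHle _) (hψ0 g))
  have hRint : IntegrableOn (fun x : G => ψ g * H (x * g)) F μ := by
    apply Measure.integrableOn_of_bounded hμF
      hRcont.aestronglyMeasurable (M := ψ g * BH)
    filter_upwards with x
    rw [Real.norm_eq_abs, abs_of_nonneg (mul_nonneg (hψ0 g) (hHnonneg _))]
    exact mul_le_mul_of_nonneg_left (hBHle _) (hψ0 g)
  have step1 : (∫ x in F, (h x (f (x * g)) (f (x * g))).re ∂μ)
      ≤ ∫ x in F, ψ g * H (x * g) ∂μ :=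
    setIntegral_mono hLint hRint key2
  -- change of variables and fundamental domain invariance
  have hHint : IntegrableOn H F μ := by
    apply Measure.integrableOn_of_bounded hμF hHcont.aestronglyMeasurable (M := BH)
    filter_upwards with x
    rw [Real.norm_eq_abs, abs_of_nonneg (hHnonneg _)]
    exact hBHle x
  have hFD' : IsFundamentalDomain Γ ((Equiv.mulRight g) '' F) μ := by
    apply hF.image_of_equiv (Equiv.mulRight g)
      ((measurePreserving_mul_right μ g⁻¹).quasiMeasurePreserving) (Equiv.refl Γ)
    intro γ x
    show (γ • x) * g = γ • (x * g)
    show ((γ : G) * x) * g = (γ : G) * (x * g)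
    group
  have step2 : (∫ x in F, H (x * g) ∂μ) = ∫ x in F, H x ∂μ := by
    have hcv : (∫ y in (Equiv.mulRight g) '' F, H y ∂μ) = ∫ x in F, H (x * g) ∂μ := by
      exact (measurePreserving_mul_right μ g).setIntegral_image_emb
        (MeasurableEquiv.mulRight g).measurableEmbedding H F
    rw [← hcv]
    refine hFD'.setIntegral_eq hF (f := H) ?_
    intro γ x
    exact hHinv γ x
  calc (∫ x in F, (h x (f (x * g)) (f (x * g))).re ∂μ)
      ≤ ∫ x in F, ψ g * H (x * g) ∂μ := step1
    _ = ψ g * ∫ x in F, H (x * g) ∂μ := integral_const_mul _ _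
    _ = ψ g * ∫ x in F, H x ∂μ := by rw [step2]
    _ = ψ g * ∫ x in F, (h x (f x) (f x)).re ∂μ := rfl
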